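/- Let B ∈ ℝ^{m×s}, A ∈ ℝ^{m×k}, n ∈ ℝ^m, z ∈ Δ^k, and f satisfy the standard assumption. Then f(R_B^f(Az + n)) ≤ f(R_B^f(Az) + n) and f(R_B^f(Az + n)) ≤ f(R_B^f(A)z + n). -/

import Mathlib

noncomputable section

open scoped BigOperators

abbrev E (m : ℕ) := EuclideanSpace ℝ (Fin m)

def toE {m : ℕ} (x : Fin m → ℝ) : E m := WithLp.toLp 2 x

/-- The unit simplex `Δ = {y | y ≥ 0, ∑ y ≤ 1}`. -/
def simplex (n : Type*) [Fintype n] : Set (n → ℝ) :=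
  {y | (∀ i, 0 ≤ y i) ∧ ∑ i, y i ≤ 1}

/-- Assumption 2 of the paper: `f` is `μ`-strongly convex with `L`-Lipschitz
gradient `f'`, and `0` is its global minimizer with `f 0 = 0`. -/
structure GoodF {m : ℕ} (f : E m → ℝ) (f' : E m → E m) (μ L : ℝ) : Prop where
  mu_pos : 0 < μ
  grad : ∀ x, HasGradientAt f (f' x) x
  lip : ∀ x y : E m, ‖f' x - f' y‖ ≤ L * ‖x - y‖
  sconv : ∀ x y : E m, ∀ δ : ℝ, 0 ≤ δ → δ ≤ 1 →
    f (δ • x + (1 - δ) • y) ≤ δ * f x + (1 - δ) * f y - μ / 2 * δ * (1 - δ) * ‖x - y‖ ^ 2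
  f_zero : f 0 = 0
  min_zero : ∀ x, f 0 ≤ f x

/-- A minimizer over the unit simplex of `y ↦ f (x - B y)` (chosen via choice). -/
def argminSimplex {m : ℕ} {n : Type*} [Fintype n] (f : E m → ℝ)
    (B : Matrix (Fin m) n ℝ) (x : E m) : n → ℝ :=
  Classical.epsilon fun y => y ∈ simplex n ∧
    ∀ z ∈ simplex n, f (x - toE (B.mulVec y)) ≤ f (x - toE (B.mulVec z))

/-- The residual `R_B^f(x) = x - B y*` where `y* = argmin_{y ∈ Δ} f (x - B y)`. -/
def resid {m : ℕ} {n : Type*} [Fintype n] (f : E m → ℝ)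
    (B : Matrix (Fin m) n ℝ) (x : E m) : E m :=
  x - toE (B.mulVec (argminSimplex f B x))

/-- Column-wise residual matrix `R_B^f(A)`. -/
def residMat {m : ℕ} {n k : Type*} [Fintype n] (f : E m → ℝ)
    (B : Matrix (Fin m) n ℝ) (A : Matrix (Fin m) k ℝ) : Matrix (Fin m) k ℝ :=
  fun i j => resid f B (toE fun i' => A i' j) i

/-- `‖N‖_{1,2}`: the maximum `ℓ₂` column norm. -/
def norm12 {m : ℕ} {n : Type*} [Fintype n] (N : Matrix (Fin m) n ℝ) : ℝ :=
  sSup {c | ∃ j, c = ‖toE fun i => N i j‖}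

/-- `α(W)`: minimum distance between a column of `W` and the convex hull of the
other columns of `W` and the origin. -/
def alpha {m r : ℕ} (W : Matrix (Fin m) (Fin r) ℝ) : ℝ :=
  sInf {c | ∃ (j : Fin r) (x : Fin r → ℝ), x ∈ simplex (Fin r) ∧ x j = 0 ∧
    c = ‖toE (fun i => W i j) - toE (W.mulVec x)‖}

/-- `σ(W)`: smallest singular value (`min_{‖z‖₂ ≥ 1} ‖Wz‖₂`) if `m ≥ r`, and `0` if `m < r`. -/
def smin {m r : ℕ} (W : Matrix (Fin m) (Fin r) ℝ) : ℝ :=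
  if r ≤ m then sInf {c | ∃ z : Fin r → ℝ, 1 ≤ ‖toE z‖ ∧ c = ‖toE (W.mulVec z)‖} else 0

/-- `[B, x]`: append the column `x` to `B`. -/
def appendCol {m s : ℕ} (B : Matrix (Fin m) (Fin s) ℝ) (x : E m) :
    Matrix (Fin m) (Fin (s + 1)) ℝ :=
  fun i => Fin.snoc (fun j => B i j) (x i)

/-- `[A, B]`: horizontal concatenation. -/
def appendMat {m k s : ℕ} (A : Matrix (Fin m) (Fin k) ℝ) (B : Matrix (Fin m) (Fin s) ℝ) :
    Matrix (Fin m) (Fin (k + s)) ℝ :=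
  fun i => Fin.append (fun j => A i j) (fun j => B i j)

/-- `ω(P) = min (min_i ‖p_i‖₂, (1/√2) min_{i ≠ j} ‖p_i - p_j‖₂)`. -/
def omegaM {m : ℕ} {k : Type*} [Fintype k] (P : Matrix (Fin m) k ℝ) : ℝ :=
  sInf ({c | ∃ i, c = ‖toE fun a => P a i‖} ∪
    {c | ∃ i j, i ≠ j ∧ c = (Real.sqrt 2)⁻¹ * ‖(toE fun a => P a i) - toE fun a => P a j‖})

/-- `β(W) = min (ν_β(W), γ_β(W)/√2)` as in the paper. -/
def beta {m r : ℕ} (f : E m → ℝ) (W : Matrix (Fin m) (Fin r) ℝ) : ℝ :=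
  sInf ({c | ∃ j : Fin r,
      c = ‖resid f (W.submatrix id fun p : {i // i ≠ j} => (p : Fin r)) (toE fun a => W a j)‖} ∪
    {c | ∃ (i j : Fin r) (J : Finset (Fin r)), i ≠ j ∧ i ∉ J ∧ j ∉ J ∧
      c = (Real.sqrt 2)⁻¹ *
        ‖resid f (W.submatrix id fun p : J => (p : Fin r)) (toE fun a => W a i) -
         resid f (W.submatrix id fun p : J => (p : Fin r)) (toE fun a => W a j)‖})

theorem Matrix.isHermitian_transpose_mul_self {m n : Type*} [Fintype m]
    (A : Matrix m n ℝ) : (Matrix.transpose A * A).IsHermitian := by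
  rw [Matrix.IsHermitian, Matrix.conjTranspose_mul, Matrix.conjTranspose_eq_transpose_of_trivial,
    Matrix.conjTranspose_eq_transpose_of_trivial, Matrix.transpose_transpose]

/-- Singular values of `B` in nonincreasing order (`i`-th largest at index `i`). -/
def singVals {m s : ℕ} (B : Matrix (Fin m) (Fin s) ℝ) : Fin s → ℝ := fun i =>
  Real.sqrt (((Matrix.isHermitian_transpose_mul_self B).eigenvalues ∘
    Tuple.sort (Matrix.isHermitian_transpose_mul_self B).eigenvalues) i.rev)

/-- The spectral norm `‖N‖₂` (ℓ₂ operator norm). -/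
def spec {m s : ℕ} (N : Matrix (Fin m) (Fin s) ℝ) : ℝ :=
  ‖LinearMap.toContinuousLinearMap (Matrix.toEuclideanLin N)‖

lemma simplex_isCompact {n : Type*} [Fintype n] : IsCompact (simplex n) := by
  have hsub : simplex n ⊆ Set.Icc (0 : n → ℝ) 1 := by
    intro y hy
    obtain ⟨h1, h2⟩ := hy
    constructor
    · intro i; exact h1 i
    · intro i
      calc y i ≤ ∑ j, y j := Finset.single_le_sum (fun j _ => h1 j) (Finset.mem_univ i)
        _ ≤ 1 := h2
  have hclosed : IsClosed (simplex n) := by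
    have : simplex n = (⋂ i, {y : n → ℝ | 0 ≤ y i}) ∩ {y : n → ℝ | ∑ i, y i ≤ 1} := by
      ext y; simp [simplex]
    rw [this]
    exact IsClosed.inter
      (isClosed_iInter fun i => isClosed_le continuous_const (continuous_apply i))
      (isClosed_le (continuous_finset_sum _ fun i _ => continuous_apply i) continuous_const)
  exact isCompact_Icc.of_isClosed_subset hclosed hsub

lemma zero_mem_simplex {n : Type*} [Fintype n] : (0 : n → ℝ) ∈ simplex n := by
  constructor
  · intro i; simp
  · simp

lemma argmin_spec {m : ℕ} {n : Type*} [Fintype n] {μ L : ℝ} (f : E m → ℝ) (f' : E m → E m)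
    (hf : GoodF f f' μ L) (B : Matrix (Fin m) n ℝ) (x : E m) :
    argminSimplex f B x ∈ simplex n ∧
      ∀ y ∈ simplex n, f (resid f B x) ≤ f (x - toE (B.mulVec y)) := by
  have hfc : Continuous f := by
    have : Differentiable ℝ f := fun x => (hf.grad x).differentiableAt
    exact this.continuous
  have hmv : Continuous fun y : n → ℝ => B.mulVec y := by
    have h := (Matrix.mulVecLin B).continuous_of_finiteDimensional
    exact h
  have hg : Continuous fun y : n → ℝ => f (x - toE (B.mulVec y)) := by
    apply hfc.comp
    exact Continuous.sub continuous_const ((PiLp.continuous_toLp 2 _).comp hmv)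
  obtain ⟨y0, hy0S, hy0min⟩ := simplex_isCompact.exists_isMinOn
    ⟨0, zero_mem_simplex⟩ hg.continuousOn
  have hex : ∃ y, y ∈ simplex n ∧
      ∀ w ∈ simplex n, f (x - toE (B.mulVec y)) ≤ f (x - toE (B.mulVec w)) :=
    ⟨y0, hy0S, fun w hw => isMinOn_iff.mp hy0min w hw⟩
  have hspec := Classical.epsilon_spec hex
  exact ⟨hspec.1, fun y hy => hspec.2 y hy⟩

theorem stmt12 (m s k : ℕ) (μ L : ℝ) (f : E m → ℝ) (f' : E m → E m) (hf : GoodF f f' μ L)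
    (B : Matrix (Fin m) (Fin s) ℝ) (A : Matrix (Fin m) (Fin k) ℝ) (n : E m)
    (z : Fin k → ℝ) (hz : z ∈ simplex (Fin k)) :
    f (resid f B (toE (A.mulVec z) + n)) ≤ f (resid f B (toE (A.mulVec z)) + n) ∧
    f (resid f B (toE (A.mulVec z) + n)) ≤ f (toE ((residMat f B A).mulVec z) + n) := by
  obtain ⟨hmem, hmin⟩ := argmin_spec f f' hf B (toE (A.mulVec z) + n)
  constructor
  · -- first inequality
    obtain ⟨hmem', _⟩ := argmin_spec f f' hf B (toE (A.mulVec z))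
    have h := hmin _ hmem'
    have heq : toE (A.mulVec z) + n - toE (B.mulVec (argminSimplex f B (toE (A.mulVec z)))) =
        resid f B (toE (A.mulVec z)) + n := by
      simp only [resid]; abel
    rwa [heq] at h
  · -- second inequality
    set Y : Fin k → Fin s → ℝ := fun j => argminSimplex f B (toE fun i => A i j) with hY
    have hYmem : ∀ j, Y j ∈ simplex (Fin s) :=
      fun j => (argmin_spec f f' hf B (toE fun i => A i j)).1
    set w : Fin s → ℝ := fun j' => ∑ j, Y j j' * z j with hw
    have hwmem : w ∈ simplex (Fin s) := by
      constructor
      · intro i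
        exact Finset.sum_nonneg fun j _ => mul_nonneg ((hYmem j).1 i) (hz.1 j)
      · calc ∑ i, ∑ j, Y j i * z j = ∑ j, (∑ i, Y j i) * z j := by
              rw [Finset.sum_comm]; simp [Finset.sum_mul]
          _ ≤ ∑ j, 1 * z j := by
              apply Finset.sum_le_sum
              intro j _
              exact mul_le_mul_of_nonneg_right (hYmem j).2 (hz.1 j)
          _ ≤ 1 := by simpa using hz.2
    have h := hmin w hwmem
    have heq : toE (A.mulVec z) + n - toE (B.mulVec w) =
        toE ((residMat f B A).mulVec z) + n := by
      ext i
      simp only [PiLp.add_apply, PiLp.sub_apply, toE, PiLp.toLp_apply, Matrix.mulVec, dotProduct,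
        residMat, resid, hw, hY]
      have swap : ∀ (D : Fin k → Fin s → ℝ),
          ∑ j', B i j' * ∑ j, D j j' * z j = ∑ j, (∑ j', B i j' * D j j') * z j := by
        intro D
        calc ∑ j', B i j' * ∑ j, D j j' * z j
            = ∑ j', ∑ j, B i j' * (D j j' * z j) := by simp [Finset.mul_sum]
          _ = ∑ j, ∑ j', B i j' * (D j j' * z j) := Finset.sum_comm
          _ = ∑ j, (∑ j', B i j' * D j j') * z j := by simp [Finset.sum_mul, mul_assoc]
      rw [swap]
      have expand : ∀ (D : Fin k → Fin s → ℝ),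
          ∑ j, (A i j - ∑ j', B i j' * D j j') * z j
            = ∑ j, A i j * z j - ∑ j, (∑ j', B i j' * D j j') * z j := by
        intro D
        rw [← Finset.sum_sub_distrib]
        congr 1; funext j; ring
      rw [expand]
      ring
    rwa [heq] at h
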